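/- From attainability and uniform return to a point to uniform irreducibility: Let (X,d) and (E,d_E) be compact metric spaces, ℓ a Borel probability measure on E with support equal to E, and S : X×E → X a continuous map; let κ(x) be the image of ℓ under ζ ↦ S(x,ζ), with n-step kernel κ^n, and for ζ₀,…,ζ_{n−1} ∈ E write S_n(z; ζ₀,…,ζ_{n−1}) for the iterate S(…S(S(z,ζ₀),ζ₁)…,ζ_{n−1}). Assume: (i) there exist z₀ ∈ X and ζ* ∈ E with S(z₀,ζ*) = z₀; (ii) the set {S_n(z₀; ζ₀,…,ζ_{n−1}) : n ∈ ℕ, ζ₀,…,ζ_{n−1} ∈ E} is dense in X; (iii) for every ε₀ > 0 there exist N₀ ∈ ℕ and p₀ > 0 such that κ^{N₀}(x)(B(z₀,ε₀)) ≥ p₀ for all x ∈ X. Then for every ε > 0 there exist N ∈ ℕ and p > 0 such that κ^N(x)(B(y,ε)) ≥ p for all x, y ∈ X. -/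

import Mathlib

open MeasureTheory Filter Topology
open scoped ENNReal NNReal

noncomputable def kIter {X : Type*} [MeasurableSpace X] (κ : X → Measure X) : ℕ → X → Measure X
  | 0 => fun x => Measure.dirac x
  | n + 1 => fun x => (kIter κ n x).bind κ

section Aux

variable {X E : Type*} [MetricSpace X] [CompactSpace X] [MeasurableSpace X] [BorelSpace X]
  [MetricSpace E] [CompactSpace E] [MeasurableSpace E] [BorelSpace E]

lemma measurable_kker (ℓ : Measure E) [IsProbabilityMeasure ℓ] (S : X × E → X)
    (hS : Continuous S) :
    Measurable (fun z : X => Measure.map (fun ζ => S (z, ζ)) ℓ) := by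
  apply Measure.measurable_of_measurable_coe
  intro s hs
  have h1 : ∀ z : X, Measure.map (fun ζ => S (z, ζ)) ℓ s = ℓ (Prod.mk z ⁻¹' (S ⁻¹' s)) := by
    intro z
    rw [Measure.map_apply (show Measurable (fun ζ => S (z, ζ)) from hS.measurable.comp measurable_prodMk_left) hs]
    rfl
  simp_rw [h1]
  exact measurable_measure_prodMk_left (hs.preimage hS.measurable)

lemma measurable_kIter {κ : X → Measure X} (hκ : Measurable κ) (n : ℕ) :
    Measurable (kIter κ n) := by
  induction n with
  | zero => exact Measure.measurable_dirac
  | succ n ih => exact (Measure.measurable_bind' hκ).comp ih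

lemma kIter_add {κ : X → Measure X} (hκ : Measurable κ) (m n : ℕ) (x : X) :
    kIter κ (m + n) x = (kIter κ m x).bind (kIter κ n) := by
  induction n with
  | zero => simp [kIter, Measure.bind_dirac]
  | succ n ih =>
    show (kIter κ (m + n) x).bind κ = _
    rw [ih, Measure.bind_bind (measurable_kIter hκ n).aemeasurable hκ.aemeasurable]
    rfl

lemma kIter_succ' {κ : X → Measure X} (hκ : Measurable κ) (n : ℕ) (x : X) :
    kIter κ (n + 1) x = (κ x).bind (kIter κ n) := by
  have h := kIter_add hκ 1 n x
  rw [show 1 + n = n + 1 from Nat.add_comm 1 n] at h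
  rw [h]
  congr 1
  show (Measure.dirac x).bind κ = κ x
  exact Measure.dirac_bind hκ x

lemma prod_le_kIter (ℓ : Measure E) [IsProbabilityMeasure ℓ] (S : X × E → X)
    (hS : Continuous S) :
    ∀ (Vs : List (Set E)), (∀ V ∈ Vs, MeasurableSet V) → ∀ (x : X) (A : Set X),
      MeasurableSet A →
      (∀ m : List E, List.Forall₂ (· ∈ ·) m Vs → m.foldl (fun z ζ => S (z, ζ)) x ∈ A) →
      (Vs.map (fun V => ℓ V)).prod ≤
        kIter (fun z => Measure.map (fun ζ => S (z, ζ)) ℓ) Vs.length x A := by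
  have hκ := measurable_kker ℓ S hS
  set κ := fun z : X => Measure.map (fun ζ => S (z, ζ)) ℓ with hκdef
  intro Vs
  induction Vs with
  | nil =>
    intro _ x A hA h
    have hx : x ∈ A := h [] List.Forall₂.nil
    simp only [List.map_nil, List.prod_nil, List.length_nil]
    show (1 : ℝ≥0∞) ≤ Measure.dirac x A
    rw [Measure.dirac_apply' x hA]
    simp [hx]
  | cons V Vs ih =>
    intro hVs x A hA h
    have hV : MeasurableSet V := hVs V List.mem_cons_self
    have hVs' : ∀ W ∈ Vs, MeasurableSet W := fun W hW => hVs W (List.mem_cons_of_mem V hW)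
    show (ℓ V * (Vs.map (fun V => ℓ V)).prod)
      ≤ kIter κ (Vs.length + 1) x A
    rw [kIter_succ' hκ Vs.length x,
      Measure.bind_apply hA (measurable_kIter hκ Vs.length).aemeasurable]
    have hmeas : Measurable fun z : X => kIter κ Vs.length z A :=
      (Measure.measurable_coe hA).comp (measurable_kIter hκ Vs.length)
    rw [lintegral_map hmeas (show Measurable (fun ζ => S (x, ζ)) from hS.measurable.comp measurable_prodMk_left)]
    calc ℓ V * (Vs.map (fun V => ℓ V)).prod
        = ∫⁻ _ in V, (Vs.map (fun V => ℓ V)).prod ∂ℓ := by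
          rw [setLIntegral_const]; ring
      _ ≤ ∫⁻ ζ in V, kIter κ Vs.length (S (x, ζ)) A ∂ℓ := by
          apply setLIntegral_mono' hV
          intro ζ hζ
          exact ih hVs' (S (x, ζ)) A hA
            (fun m hm => h (ζ :: m) (List.Forall₂.cons hζ hm))
      _ ≤ ∫⁻ ζ, kIter κ Vs.length (S (x, ζ)) A ∂ℓ := setLIntegral_le_lintegral V _

lemma cont_fold (S : X × E → X) (hS : Continuous S) :
    ∀ (l : List E) (x : X) (ε : ℝ), 0 < ε → ∃ δ > 0, ∃ ρ > 0,
      ∀ (z : X) (m : List E), dist z x < δ →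
        List.Forall₂ (fun a b => dist a b < ρ) m l →
        dist (m.foldl (fun z ζ => S (z, ζ)) z) (l.foldl (fun z ζ => S (z, ζ)) x) < ε := by
  intro l
  induction l with
  | nil =>
    intro x ε hε
    refine ⟨ε, hε, 1, one_pos, fun z m hz hm => ?_⟩
    cases hm
    simpa using hz
  | cons a l ih =>
    intro x ε hε
    obtain ⟨δ', hδ', ρ', hρ', hkey⟩ := ih (S (x, a)) ε hε
    obtain ⟨δ, hδ, hScont⟩ := Metric.continuous_iff.mp hS (x, a) δ' hδ'
    refine ⟨δ, hδ, min δ ρ', lt_min hδ hρ', fun z m hz hm => ?_⟩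
    cases hm with
    | cons hb hm' =>
      rename_i b m'
      have hstep : dist (S (z, b)) (S (x, a)) < δ' := by
        apply hScont
        rw [Prod.dist_eq]
        exact max_lt hz (lt_of_lt_of_le hb (min_le_left _ _))
      have hm'' : List.Forall₂ (fun a b => dist a b < ρ') m' l :=
        hm'.imp (fun a b h => lt_of_lt_of_le h (min_le_right _ _))
      exact hkey (S (z, b)) m' hstep hm''

lemma foldl_replicate (S : X × E → X) (z₀ : X) (ζstar : E) (hfix : S (z₀, ζstar) = z₀) :
    ∀ m : ℕ, (List.replicate m ζstar).foldl (fun z ζ => S (z, ζ)) z₀ = z₀ := by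
  intro m
  induction m with
  | zero => rfl
  | succ m ihm => rw [List.replicate_succ, List.foldl_cons, hfix]; exact ihm

lemma list_prod_ne_zero : ∀ L : List ℝ≥0∞, (∀ a ∈ L, a ≠ 0) → L.prod ≠ 0 := by
  intro L
  induction L with
  | nil => simp
  | cons a L ih =>
    intro h
    rw [List.prod_cons]
    exact mul_ne_zero (h a List.mem_cons_self)
      (ih fun b hb => h b (List.mem_cons_of_mem a hb))

end Aux

/-- From attainability and uniform return to a point to uniform
irreducibility: if the noise has full support, some point `z₀` is fixed by some noise value,
the set attainable from `z₀` is dense, and the chain returns to any neighbourhood of `z₀`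
with uniformly positive probability, then the chain is uniformly irreducible. -/
theorem uniform_irreducibility_of_attainability
    {X E : Type*} [MetricSpace X] [CompactSpace X] [MeasurableSpace X] [BorelSpace X]
    [MetricSpace E] [CompactSpace E] [MeasurableSpace E] [BorelSpace E]
    (ℓ : Measure E) [IsProbabilityMeasure ℓ]
    (hsupp : ∀ U : Set E, IsOpen U → U.Nonempty → 0 < ℓ U)
    (S : X × E → X) (hS : Continuous S)
    (z₀ : X) (ζstar : E) (hfix : S (z₀, ζstar) = z₀)
    (hdense : Dense {y : X | ∃ l : List E, y = l.foldl (fun z ζ => S (z, ζ)) z₀})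
    (hreturn : ∀ ε₀ : ℝ, 0 < ε₀ → ∃ (N₀ : ℕ) (p₀ : ℝ≥0∞), 0 < p₀ ∧
      ∀ x : X,
        p₀ ≤ kIter (fun z => Measure.map (fun ζ => S (z, ζ)) ℓ) N₀ x (Metric.ball z₀ ε₀)) :
    ∀ ε : ℝ, 0 < ε → ∃ (N : ℕ) (p : ℝ≥0∞), 0 < p ∧
      ∀ x y : X,
        p ≤ kIter (fun z => Measure.map (fun ζ => S (z, ζ)) ℓ) N x (Metric.ball y ε) := by
  intro ε hε
  have hκ := measurable_kker ℓ S hS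
  set κ := fun z : X => Measure.map (fun ζ => S (z, ζ)) ℓ with hκdef
  set A : Set X := {y : X | ∃ l : List E, y = l.foldl (fun z ζ => S (z, ζ)) z₀} with hAdef
  -- finite subcover by balls around attainable points
  have hcov : Set.univ ⊆ ⋃ i : A, Metric.ball (i : X) (ε / 2) := by
    intro x _
    obtain ⟨w, hw⟩ := Metric.dense_iff.mp hdense x (ε / 2) (half_pos hε)
    exact Set.mem_iUnion.mpr ⟨⟨w, hw.2⟩, Metric.mem_ball'.mp hw.1⟩
  obtain ⟨t, ht⟩ := isCompact_univ.elim_finite_subcover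
    (fun i : A => Metric.ball (i : X) (ε / 2)) (fun i => Metric.isOpen_ball) hcov
  have htne : t.Nonempty := by
    obtain ⟨i, hi⟩ := Set.mem_iUnion₂.mp (ht (Set.mem_univ z₀))
    exact ⟨i, hi.1⟩
  -- words
  have hword : ∀ i : A, ∃ l : List E, (i : X) = l.foldl (fun z ζ => S (z, ζ)) z₀ :=
    fun i => i.2
  choose word hwordspec using hword
  set M : ℕ := t.sup (fun i => (word i).length) with hMdef
  set pad : A → List E :=
    fun i => List.replicate (M - (word i).length) ζstar ++ word i with hpaddef
  have hpadlen : ∀ i ∈ t, (pad i).length = M := by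
    intro i hi
    have : (word i).length ≤ M := Finset.le_sup (f := fun i => (word i).length) hi
    simp [hpaddef, Nat.sub_add_cancel this]
  have hpadfold : ∀ i : A, (pad i).foldl (fun z ζ => S (z, ζ)) z₀ = (i : X) := by
    intro i
    rw [hpaddef]
    simp only [List.foldl_append, foldl_replicate S z₀ ζstar hfix]
    exact (hwordspec i).symm
  -- continuity data for each padded word
  have hcontdata : ∀ i : A, ∃ δ > 0, ∃ ρ > 0,
      ∀ (z : X) (m : List E), dist z z₀ < δ →
        List.Forall₂ (fun a b => dist a b < ρ) m (pad i) →
        dist (m.foldl (fun z ζ => S (z, ζ)) z)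
          ((pad i).foldl (fun z ζ => S (z, ζ)) z₀) < ε / 2 :=
    fun i => cont_fold S hS (pad i) z₀ (ε / 2) (half_pos hε)
  choose δ hδpos ρ hρpos hkey using hcontdata
  set δmin : ℝ := t.inf' htne δ with hδmindef
  have hδminpos : 0 < δmin := by
    rw [hδmindef, Finset.lt_inf'_iff]
    exact fun i hi => hδpos i
  obtain ⟨N₀, p₀, hp₀, hret⟩ := hreturn δmin hδminpos
  set q : A → ℝ≥0∞ := fun i => ((pad i).map (fun a => ℓ (Metric.ball a (ρ i)))).prod
    with hqdef
  have hqpos : ∀ i : A, 0 < q i := by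
    intro i
    rw [pos_iff_ne_zero]
    apply list_prod_ne_zero
    intro a ha
    obtain ⟨b, _, hb⟩ := List.mem_map.mp ha
    rw [← hb]
    exact (hsupp (Metric.ball b (ρ i)) Metric.isOpen_ball
      ⟨b, Metric.mem_ball_self (hρpos i)⟩).ne'
  set qmin : ℝ≥0∞ := t.inf' htne q with hqmindef
  have hqminpos : 0 < qmin := by
    rw [hqmindef, Finset.lt_inf'_iff]
    exact fun i hi => hqpos i
  refine ⟨N₀ + M, qmin * p₀, ENNReal.mul_pos hqminpos.ne' hp₀.ne', fun x y => ?_⟩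
  -- find a covering ball containing y
  obtain ⟨i, hi⟩ := Set.mem_iUnion₂.mp (ht (Set.mem_univ y))
  obtain ⟨hit, hyi⟩ := hi
  have hsub : Metric.ball (i : X) (ε / 2) ⊆ Metric.ball y ε := by
    intro w hw
    rw [Metric.mem_ball] at *
    calc dist w y ≤ dist w (i : X) + dist (i : X) y := dist_triangle _ _ _
      _ < ε / 2 + ε / 2 := add_lt_add hw (Metric.mem_ball'.mp hyi)
      _ = ε := add_halves ε
  -- Step 1: from any z in the δmin-ball around z₀, M steps reach the ball around i
  have hstep1 : ∀ z ∈ Metric.ball z₀ δmin,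
      qmin ≤ kIter κ M z (Metric.ball (i : X) (ε / 2)) := by
    intro z hz
    set Vs : List (Set E) := (pad i).map (fun a => Metric.ball a (ρ i)) with hVsdef
    have hVslen : Vs.length = M := by rw [hVsdef, List.length_map]; exact hpadlen i hit
    have hVsmeas : ∀ V ∈ Vs, MeasurableSet V := by
      intro V hV
      obtain ⟨b, _, hb⟩ := List.mem_map.mp hV
      rw [← hb]; exact measurableSet_ball
    have hcond : ∀ m : List E, List.Forall₂ (· ∈ ·) m Vs →
        m.foldl (fun z ζ => S (z, ζ)) z ∈ Metric.ball (i : X) (ε / 2) := by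
      intro m hm
      have hm' : List.Forall₂ (fun a b => dist a b < ρ i) m (pad i) := by
        rw [hVsdef, List.forall₂_map_right_iff] at hm
        exact hm.imp (fun a b h => Metric.mem_ball.mp h)
      have hzδ : dist z z₀ < δ i := lt_of_lt_of_le hz (Finset.inf'_le δ hit)
      have := hkey i z m hzδ hm'
      rw [hpadfold i] at this
      exact Metric.mem_ball.mpr this
    have hbd := prod_le_kIter ℓ S hS Vs hVsmeas z (Metric.ball (i : X) (ε / 2))
      measurableSet_ball hcond
    rw [hVslen] at hbd
    refine le_trans ?_ hbd
    have : (Vs.map (fun V => ℓ V)).prod = q i := by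
      rw [hVsdef, hqdef, List.map_map]; rfl
    rw [this]
    exact Finset.inf'_le q hit
  -- Step 2: combine with the return property
  have hdecomp : kIter κ (N₀ + M) x = (kIter κ N₀ x).bind (kIter κ M) :=
    kIter_add hκ N₀ M x
  calc qmin * p₀ ≤ qmin * kIter κ N₀ x (Metric.ball z₀ δmin) :=
        mul_le_mul_right (hret x) qmin
    _ = ∫⁻ _ in Metric.ball z₀ δmin, qmin ∂(kIter κ N₀ x) := by
        rw [setLIntegral_const]
    _ ≤ ∫⁻ z in Metric.ball z₀ δmin, kIter κ M z (Metric.ball (i : X) (ε / 2))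
          ∂(kIter κ N₀ x) :=
        setLIntegral_mono' measurableSet_ball hstep1
    _ ≤ ∫⁻ z, kIter κ M z (Metric.ball (i : X) (ε / 2)) ∂(kIter κ N₀ x) :=
        setLIntegral_le_lintegral _ _
    _ = kIter κ (N₀ + M) x (Metric.ball (i : X) (ε / 2)) := by
        rw [hdecomp, Measure.bind_apply measurableSet_ball (measurable_kIter hκ M).aemeasurable]
    _ ≤ kIter κ (N₀ + M) x (Metric.ball y ε) := measure_mono hsub
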